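/- arXiv:1804.05660 — 2 statements merged into one kernel-verified Lean document; each statement's English description precedes it below -/
import Mathlib

section
/- With the set-up of the previous statement, for every $f\in X^*$ we have $\|f\| \le \theta(f)$; and if $\theta(f)<\infty$ then $\|f - h_m(f)\| \to 0$ as $m\to\infty$, where $h_m(f) = \sum_{k=1}^m q_k(f)\,\omega_k(f)$ and $\omega_k(f) = \sum_{\gamma\in G_k(f)} P_\gamma^* f / \|P_\gamma^* f\|$. -/
open Filter
open scoped ENNReal NNReal

noncomputable section

variable {X : Type*} [NormedAddCommGroup X] [NormedSpace ℝ X] {Γ : Type*}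

/-- The adjoint action: `P γ* f = f ∘ P γ`. -/
def Pstar (P : Γ → X →L[ℝ] X) (γ : Γ) (f : StrongDual ℝ X) : StrongDual ℝ X :=
  f.comp (P γ)

/-- The range of `f`: the set of norms of its non-zero components. -/
def ranSet (P : Γ → X →L[ℝ] X) (f : StrongDual ℝ X) : Set ℝ :=
  {r | ∃ γ, Pstar P γ f ≠ 0 ∧ ‖Pstar P γ f‖ = r}

/-- `pfun P f k` is the `k`-th largest element of `ranSet P f` (for `k ≥ 1`),
with value `0` if fewer than `k` values exist (`sSup ∅ = 0` in `ℝ`). -/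
def pfun (P : Γ → X →L[ℝ] X) (f : StrongDual ℝ X) : ℕ → ℝ
  | 0 => 0
  | 1 => sSup (ranSet P f)
  | (k + 2) => sSup {r | r ∈ ranSet P f ∧ r < pfun P f (k + 1)}

/-- `qfun P f k = p_k(f) - p_{k+1}(f)`. -/
def qfun (P : Γ → X →L[ℝ] X) (f : StrongDual ℝ X) (k : ℕ) : ℝ :=
  pfun P f k - pfun P f (k + 1)

/-- `Gset P f k = {γ ∈ supp f : ‖P γ* f‖ ≥ p_k(f)}`. -/
def Gset (P : Γ → X →L[ℝ] X) (f : StrongDual ℝ X) (k : ℕ) : Set Γ :=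
  {γ | Pstar P γ f ≠ 0 ∧ pfun P f k ≤ ‖Pstar P γ f‖}

/-- `rho P A`: the supremum, over finite subsets `S ⊆ A` and functionals `f` whose
components on `S` have norm at most `1`, of `‖∑_{γ ∈ S} P γ* f‖` (valued in `ℝ≥0∞`).
For a finite set `A` this agrees with the quantity `ρ(A)` of the paper, since `ρ`
is increasing with respect to inclusion. -/
def rho (P : Γ → X →L[ℝ] X) (A : Set Γ) : ℝ≥0∞ :=
  ⨆ (S : Finset Γ) (_ : ↑S ⊆ A) (f : StrongDual ℝ X)
    (_ : ∀ γ ∈ S, ‖Pstar P γ f‖ ≤ 1), ENNReal.ofReal ‖∑ γ ∈ S, Pstar P γ f‖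

/-- `theta P f = ∑_{k=1}^∞ q_k(f) ρ(G_k(f))`, valued in `ℝ≥0∞`. -/
def theta (P : Γ → X →L[ℝ] X) (f : StrongDual ℝ X) : ℝ≥0∞ :=
  ∑' k : ℕ, ENNReal.ofReal (qfun P f (k + 1)) * rho P (Gset P f (k + 1))

end

section Aux

variable {X : Type*} [NormedAddCommGroup X] [NormedSpace ℝ X] {Γ : Type*}
  (P : Γ → X →L[ℝ] X) (f : StrongDual ℝ X)

lemma ranSet_pos {r : ℝ} (hr : r ∈ ranSet P f) : 0 < r := by
  obtain ⟨γ, hγ, rfl⟩ := hr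
  exact norm_pos_iff.mpr hγ

lemma ranSet_bddAbove {C : ℝ} (hC : ∀ γ, ‖P γ‖ ≤ C) : BddAbove (ranSet P f) := by
  refine ⟨‖f‖ * C, fun r hr => ?_⟩
  obtain ⟨γ, hγ, rfl⟩ := hr
  calc ‖Pstar P γ f‖ ≤ ‖f‖ * ‖P γ‖ := ContinuousLinearMap.opNorm_comp_le _ _
    _ ≤ ‖f‖ * C := by
        exact mul_le_mul_of_nonneg_left (hC γ) (norm_nonneg f)

lemma pfun_nonneg : ∀ k, 0 ≤ pfun P f k
  | 0 => le_refl 0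
  | 1 => Real.sSup_nonneg fun r hr => (ranSet_pos P f hr).le
  | (k + 2) => Real.sSup_nonneg fun r hr => (ranSet_pos P f hr.1).le

lemma pfun_succ_le : ∀ k, pfun P f (k + 2) ≤ pfun P f (k + 1) := fun k =>
  Real.sSup_le (fun r hr => hr.2.le) (pfun_nonneg P f (k + 1))

lemma pfun_antitone {j k : ℕ} (hj : 1 ≤ j) (hjk : j ≤ k) : pfun P f k ≤ pfun P f j := by
  induction k with
  | zero => omega
  | succ n ih =>
    rcases Nat.lt_or_ge j (n + 1) with hlt | hge
    · have hn : 1 ≤ n := by omega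
      obtain ⟨m, rfl⟩ : ∃ m, n = m + 1 := ⟨n - 1, by omega⟩
      exact (pfun_succ_le P f m).trans (ih (by omega))
    · have : j = n + 1 := by omega
      subst this; rfl

end Aux

section Aux2
variable {X : Type*} [NormedAddCommGroup X] [NormedSpace ℝ X] {Γ : Type*}
  (P : Γ → X →L[ℝ] X) (f : StrongDual ℝ X)

/-- If the sup defining `p (k+2)` is at least `ε > 0`, and `ranSet` has only finitely many
elements `≥ ε/2`, then the sup is attained and strictly below `p (k+1)`. -/
lemma sup_attained {S : Set ℝ} {ε : ℝ} (hε : 0 < ε)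
    (hpos : ∀ r ∈ S, 0 < r) (hbdd : BddAbove S)
    (hfin : {r ∈ S | ε / 2 ≤ r}.Finite) (hsup : ε ≤ sSup S) : sSup S ∈ S := by
  have hne : S.Nonempty := by
    by_contra hne
    rw [Set.not_nonempty_iff_eq_empty] at hne
    rw [hne, Real.sSup_empty] at hsup; linarith
  have h2 : ε / 2 < sSup S := by linarith
  obtain ⟨b, hbS, hb⟩ := exists_lt_of_lt_csSup hne h2
  set S' : Set ℝ := {r ∈ S | ε / 2 ≤ r} with hS'
  have hS'ne : S'.Nonempty := ⟨b, hbS, hb.le⟩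
  have hS'bdd : BddAbove S' := hfin.bddAbove
  have hM : sSup S' ∈ S' := Set.Nonempty.csSup_mem hS'ne hfin
  have hMS : sSup S' ∈ S := hM.1
  have hle : sSup S ≤ sSup S' := by
    apply Real.sSup_le _ ((hpos _ hMS).le)
    intro x hx
    rcases le_or_gt x (ε / 2) with h | h
    · exact h.trans hM.2
    · exact le_csSup hS'bdd ⟨hx, h.le⟩
  have hge : sSup S' ≤ sSup S := le_csSup hbdd hMS
  exact (le_antisymm hle hge) ▸ hMS

end Aux2

section Aux3
variable {X : Type*} [NormedAddCommGroup X] [NormedSpace ℝ X] {Γ : Type*}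
  (P : Γ → X →L[ℝ] X) (f : StrongDual ℝ X)

lemma pfun_two_eq (k : ℕ) :
    pfun P f (k + 2) = sSup {r | r ∈ ranSet P f ∧ r < pfun P f (k + 1)} := by
  simp [pfun]

lemma pfun_eventually_lt (hbdd : BddAbove (ranSet P f))
    (hranfin : ∀ ε > 0, {r ∈ ranSet P f | ε ≤ r}.Finite) :
    ∀ ε > 0, ∃ N, 1 ≤ N ∧ pfun P f N < ε := by
  intro ε hε
  by_contra hcon
  push_neg at hcon
  have hall : ∀ N, 1 ≤ N → ε ≤ pfun P f N := fun N h1 => hcon N h1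
  have step : ∀ n : ℕ, pfun P f (n + 2) ∈ ranSet P f ∧ pfun P f (n + 2) < pfun P f (n + 1) := by
    intro n
    have hsup : ε ≤ sSup {r | r ∈ ranSet P f ∧ r < pfun P f (n + 1)} := by
      rw [← pfun_two_eq]; exact hall (n + 2) (by omega)
    have hmem := sup_attained (S := {r | r ∈ ranSet P f ∧ r < pfun P f (n + 1)}) hε
      (fun r hr => ranSet_pos P f hr.1) (hbdd.mono fun r hr => hr.1)
      ((hranfin (ε / 2) (by linarith)).subset fun r hr => ⟨hr.1.1, hr.2⟩) hsup
    rw [← pfun_two_eq] at hmem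
    exact ⟨hmem.1, hmem.2⟩
  have hanti : StrictAnti (fun n => pfun P f (n + 2)) := by
    apply strictAnti_nat_of_succ_lt
    intro n
    exact (step (n + 1)).2
  have hinf : {r ∈ ranSet P f | ε ≤ r}.Infinite := by
    apply Set.infinite_of_injective_forall_mem hanti.injective
    intro n
    exact ⟨(step n).1, hall (n + 2) (by omega)⟩
  exact hinf (hranfin ε hε)

lemma pfun_tendsto (hbdd : BddAbove (ranSet P f))
    (hranfin : ∀ ε > 0, {r ∈ ranSet P f | ε ≤ r}.Finite) :
    Tendsto (fun k => pfun P f k) atTop (nhds 0) := by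
  rw [Metric.tendsto_atTop]
  intro ε hε
  obtain ⟨N, hN1, hN⟩ := pfun_eventually_lt P f hbdd hranfin ε hε
  refine ⟨N, fun k hk => ?_⟩
  rw [Real.dist_eq, sub_zero, abs_of_nonneg (pfun_nonneg P f k)]
  exact lt_of_le_of_lt (pfun_antitone P f hN1 hk) hN

end Aux3

section Aux4
variable {X : Type*} [NormedAddCommGroup X] [NormedSpace ℝ X] {Γ : Type*}
  (P : Γ → X →L[ℝ] X) (f : StrongDual ℝ X)

lemma exists_level (hbdd : BddAbove (ranSet P f))
    (hranfin : ∀ ε > 0, {r ∈ ranSet P f | ε ≤ r}.Finite)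
    {γ : Γ} (hγ : Pstar P γ f ≠ 0) :
    ∃ j, 1 ≤ j ∧ pfun P f j = ‖Pstar P γ f‖ ∧
      ∀ k, 1 ≤ k → k < j → ‖Pstar P γ f‖ < pfun P f k := by
  set v := ‖Pstar P γ f‖ with hv
  have hvpos : 0 < v := norm_pos_iff.mpr hγ
  have hvran : v ∈ ranSet P f := ⟨γ, hγ, rfl⟩
  obtain ⟨N, hN1, hN⟩ := pfun_eventually_lt P f hbdd hranfin v hvpos
  have hex : ∃ k, 1 ≤ k ∧ pfun P f k ≤ v := ⟨N, hN1, hN.le⟩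
  classical
  set j := Nat.find hex with hjdef
  obtain ⟨hj1, hjle⟩ := Nat.find_spec hex
  have hmin : ∀ k, 1 ≤ k → k < j → v < pfun P f k := by
    intro k hk1 hkj
    have := Nat.find_min hex hkj
    push_neg at this
    exact this hk1
  refine ⟨j, hj1, ?_, hmin⟩
  refine le_antisymm hjle ?_
  match j, hj1 with
  | 0, h => exact absurd h (by omega)
  | 1, _ =>
    exact le_csSup hbdd hvran
  | (i + 2), _ =>
    have hlt : v < pfun P f (i + 1) := hmin (i + 1) (by omega) (by omega)
    rw [pfun_two_eq]
    exact le_csSup (hbdd.mono fun r hr => hr.1) ⟨hvran, hlt⟩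

lemma coef_sum (v : ℝ) (j : ℕ) (hj1 : 1 ≤ j) (hpj : pfun P f j = v)
    (hmin : ∀ k, 1 ≤ k → k < j → v < pfun P f k) (m : ℕ) :
    ∑ k ∈ Finset.range m, qfun P f (k + 1) * (if pfun P f (k + 1) ≤ v then 1 else 0)
      = v - pfun P f (max j (m + 1)) := by
  induction m with
  | zero => simp [max_eq_left hj1, hpj]
  | succ m ih =>
    rw [Finset.sum_range_succ, ih]
    rcases Nat.lt_or_ge (m + 1) j with hlt | hge
    · rw [if_neg (not_le.mpr (hmin (m + 1) (by omega) hlt))]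
      rw [max_eq_left (by omega), max_eq_left (by omega)]
      ring
    · have hle : pfun P f (m + 1) ≤ v := hpj ▸ pfun_antitone P f hj1 hge
      rw [if_pos hle, max_eq_right (by omega), max_eq_right (by omega), qfun]
      ring

end Aux4


set_option maxHeartbeats 1600000 in
/-- For every `f ∈ X*` we have `‖f‖ ≤ θ(f)`, and if `θ(f) < ∞` then `‖f - h_m(f)‖ → 0`,
where `h_m(f) = ∑_{k=1}^m q_k(f) ω_k(f)` and `ω_k(f) = ∑_{γ ∈ G_k(f)} P γ* f / ‖P γ* f‖`. -/
theorem norm_le_theta_and_hm_approx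
    {X : Type*} [NormedAddCommGroup X] [NormedSpace ℝ X] [CompleteSpace X]
    {Γ : Type*} (P : Γ → X →L[ℝ] X)
    (hproj : ∀ γ, (P γ).comp (P γ) = P γ)
    (hne : ∀ γ, P γ ≠ 0)
    (hdisj : ∀ α β, α ≠ β → (P α).comp (P β) = 0)
    (hbdd : ∃ C : ℝ, ∀ γ, ‖P γ‖ ≤ C)
    (hspanX : (Submodule.span ℝ (⋃ γ, Set.range (P γ))).topologicalClosure = ⊤)
    (hspan_dual : (Submodule.span ℝ
        (⋃ γ, Set.range (fun f : StrongDual ℝ X => f.comp (P γ)))).topologicalClosure = ⊤)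
    (f : StrongDual ℝ X)
    (hGfin : ∀ k : ℕ, (Gset P f (k + 1)).Finite)
    (omega : ℕ → StrongDual ℝ X)
    (homega : ∀ k : ℕ,
      omega k = ∑ γ ∈ (hGfin k).toFinset, ‖Pstar P γ f‖⁻¹ • Pstar P γ f)
    (h : ℕ → StrongDual ℝ X)
    (hh : ∀ m : ℕ, h m = ∑ k ∈ Finset.range m, qfun P f (k + 1) • omega k) :
    ENNReal.ofReal ‖f‖ ≤ theta P f ∧
      (theta P f ≠ ⊤ → Tendsto (fun m : ℕ => ‖f - h m‖) atTop (nhds 0)) := by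
  classical
  obtain ⟨C, hC⟩ := hbdd
  set C' : ℝ := max C 1 with hC'def
  have hC' : ∀ γ, ‖P γ‖ ≤ C' := fun γ => (hC γ).trans (le_max_left _ _)
  have hC'pos : (0:ℝ) < C' := lt_of_lt_of_le one_pos (le_max_right _ _)
  have hbddr : BddAbove (ranSet P f) := ranSet_bddAbove P f hC'
  -- the continuous linear map `g ↦ g ∘ P γ`
  set T : Γ → (StrongDual ℝ X) →L[ℝ] (StrongDual ℝ X) :=
    fun γ => (ContinuousLinearMap.compL ℝ X X ℝ).flip (P γ) with hTdef
  have hT : ∀ γ g, T γ g = Pstar P γ g := fun γ g => rfl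
  -- elements of the span have finite support
  have hsupp : ∀ g ∈ Submodule.span ℝ
      (⋃ γ, Set.range (fun g0 : StrongDual ℝ X => g0.comp (P γ))),
      ∃ Tf : Finset Γ, ∀ γ ∉ Tf, g.comp (P γ) = 0 := by
    intro g hg
    induction hg using Submodule.span_induction with
    | mem x hx =>
      obtain ⟨_, ⟨β, rfl⟩, g0, rfl⟩ := hx
      refine ⟨{β}, fun γ hγ => ?_⟩
      have hβγ : β ≠ γ := fun e => hγ (by simp [e])
      rw [ContinuousLinearMap.comp_assoc, hdisj β γ hβγ, ContinuousLinearMap.comp_zero]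
    | zero => exact ⟨∅, fun γ _ => ContinuousLinearMap.zero_comp _⟩
    | add x y hx hy ihx ihy =>
      obtain ⟨T1, h1⟩ := ihx
      obtain ⟨T2, h2⟩ := ihy
      refine ⟨T1 ∪ T2, fun γ hγ => ?_⟩
      rw [Finset.mem_union, not_or] at hγ
      rw [ContinuousLinearMap.add_comp, h1 γ hγ.1, h2 γ hγ.2, add_zero]
    | smul a x hx ihx =>
      obtain ⟨T1, h1⟩ := ihx
      exact ⟨T1, fun γ hγ => by rw [ContinuousLinearMap.smul_comp, h1 γ hγ, smul_zero]⟩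
  -- finiteness of the sets of large components
  have hfinγ : ∀ ε > 0, {γ | ε ≤ ‖Pstar P γ f‖}.Finite := by
    intro ε hε
    have hf : f ∈ closure ((Submodule.span ℝ
        (⋃ γ, Set.range (fun g0 : StrongDual ℝ X => g0.comp (P γ)))) :
          Set (StrongDual ℝ X)) := by
      have : Dense ((Submodule.span ℝ
          (⋃ γ, Set.range (fun g0 : StrongDual ℝ X => g0.comp (P γ)))) :
            Set (StrongDual ℝ X)) :=
        Submodule.dense_iff_topologicalClosure_eq_top.mpr hspan_dual
      exact this f
    obtain ⟨g, hg, hdist⟩ := Metric.mem_closure_iff.mp hf (ε / C') (by positivity)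
    obtain ⟨Tf, hTf⟩ := hsupp g hg
    apply Set.Finite.subset Tf.finite_toSet
    intro γ hγ
    by_contra hγT
    have h1 : Pstar P γ f = (f - g).comp (P γ) := by
      rw [ContinuousLinearMap.sub_comp, hTf γ hγT, sub_zero]; rfl
    have h2 : ‖Pstar P γ f‖ ≤ ‖f - g‖ * C' := by
      rw [h1]
      exact (ContinuousLinearMap.opNorm_comp_le _ _).trans
        (mul_le_mul_of_nonneg_left (hC' γ) (norm_nonneg _))
    have h3 : ‖f - g‖ < ε / C' := by rwa [← dist_eq_norm]
    have h4 : ‖f - g‖ * C' < (ε / C') * C' := mul_lt_mul_of_pos_right h3 hC'pos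
    rw [div_mul_cancel₀ _ (ne_of_gt hC'pos)] at h4
    have h5 : ε ≤ ‖Pstar P γ f‖ := hγ
    linarith
  have hranfin : ∀ ε > 0, {r ∈ ranSet P f | ε ≤ r}.Finite := by
    intro ε hε
    apply ((hfinγ ε hε).image (fun γ => ‖Pstar P γ f‖)).subset
    rintro r ⟨⟨γ, hγ0, rfl⟩, hr⟩
    exact ⟨γ, hr, rfl⟩
  -- component formula for omega
  have homega_comp : ∀ k γ, Pstar P γ (omega k) =
      if γ ∈ Gset P f (k+1) then ‖Pstar P γ f‖⁻¹ • Pstar P γ f else 0 := by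
    intro k γ
    have hTβ : ∀ β, T γ (Pstar P β f) = if β = γ then Pstar P γ f else 0 := by
      intro β
      have he : T γ (Pstar P β f) = f.comp ((P β).comp (P γ)) := rfl
      by_cases hbg : β = γ
      · subst hbg; rw [if_pos rfl, he, hproj]; rfl
      · rw [if_neg hbg, he, hdisj β γ hbg, ContinuousLinearMap.comp_zero]
    calc Pstar P γ (omega k) = T γ (omega k) := rfl
      _ = ∑ β ∈ (hGfin k).toFinset, ‖Pstar P β f‖⁻¹ • T γ (Pstar P β f) := by
          rw [homega k, map_sum]
          exact Finset.sum_congr rfl fun β _ => by rw [map_smul]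
      _ = ∑ β ∈ (hGfin k).toFinset,
            (if β = γ then ‖Pstar P β f‖⁻¹ • Pstar P γ f else 0) := by
          refine Finset.sum_congr rfl fun β _ => ?_
          rw [hTβ β]
          by_cases hbg : β = γ
          · rw [if_pos hbg, if_pos hbg]
          · rw [if_neg hbg, if_neg hbg, smul_zero]
      _ = if γ ∈ (hGfin k).toFinset then ‖Pstar P γ f‖⁻¹ • Pstar P γ f else 0 := by
          rw [Finset.sum_ite_eq' _ γ (fun β => ‖Pstar P β f‖⁻¹ • Pstar P γ f)]
      _ = if γ ∈ Gset P f (k+1) then ‖Pstar P γ f‖⁻¹ • Pstar P γ f else 0 := by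
          by_cases hγ : γ ∈ Gset P f (k+1)
          · rw [if_pos ((hGfin k).mem_toFinset.mpr hγ), if_pos hγ]
          · rw [if_neg (fun hm => hγ ((hGfin k).mem_toFinset.mp hm)), if_neg hγ]
  -- component formula for h m
  have hh_comp : ∀ m γ, Pstar P γ (h m) =
      (∑ k ∈ Finset.range m, qfun P f (k+1) •
        (if γ ∈ Gset P f (k+1) then ‖Pstar P γ f‖⁻¹ • Pstar P γ f else 0)) := by
    intro m γ
    calc Pstar P γ (h m) = T γ (h m) := rfl
      _ = ∑ k ∈ Finset.range m, qfun P f (k+1) • T γ (omega k) := by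
          rw [hh m, map_sum]
          exact Finset.sum_congr rfl fun k _ => by rw [map_smul]
      _ = _ := Finset.sum_congr rfl fun k _ => by rw [hT, homega_comp k γ]
  -- basic positivity
  have hqnn : ∀ k, 0 ≤ qfun P f (k + 1) := fun k => sub_nonneg.mpr (pfun_succ_le P f k)
  -- norm of omega bounded by rho
  have hωρ : ∀ k, ENNReal.ofReal ‖omega k‖ ≤ rho P (Gset P f (k+1)) := by
    intro k
    have hsum : ∑ γ ∈ (hGfin k).toFinset, Pstar P γ (omega k) = omega k := by
      have he : ∀ γ ∈ (hGfin k).toFinset,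
          Pstar P γ (omega k) = ‖Pstar P γ f‖⁻¹ • Pstar P γ f := fun γ hγ => by
        rw [homega_comp k γ, if_pos ((hGfin k).mem_toFinset.mp hγ)]
      rw [Finset.sum_congr rfl he, ← homega k]
    have hcond : ∀ γ ∈ (hGfin k).toFinset, ‖Pstar P γ (omega k)‖ ≤ 1 := by
      intro γ hγ
      have hγG := (hGfin k).mem_toFinset.mp hγ
      rw [homega_comp k γ, if_pos hγG, norm_smul, norm_inv, norm_norm,
        inv_mul_cancel₀ (norm_ne_zero_iff.mpr hγG.1)]
    calc ENNReal.ofReal ‖omega k‖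
        = ENNReal.ofReal ‖∑ γ ∈ (hGfin k).toFinset, Pstar P γ (omega k)‖ := by rw [hsum]
      _ ≤ rho P (Gset P f (k+1)) := by
          refine le_iSup_of_le ((hGfin k).toFinset) ?_
          refine le_iSup_of_le (by rw [Set.Finite.coe_toFinset]) ?_
          refine le_iSup_of_le (omega k) ?_
          exact le_iSup_of_le hcond le_rfl
  have hterm : ∀ k, ENNReal.ofReal (qfun P f (k+1) * ‖omega k‖) ≤
      ENNReal.ofReal (qfun P f (k+1)) * rho P (Gset P f (k+1)) := by
    intro k
    rw [ENNReal.ofReal_mul (hqnn k)]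
    exact mul_le_mul_right (hωρ k) _
  -- bound for partial sums
  have hhm_le : ∀ m, ENNReal.ofReal ‖h m‖ ≤ theta P f := by
    intro m
    calc ENNReal.ofReal ‖h m‖
        ≤ ENNReal.ofReal (∑ k ∈ Finset.range m, qfun P f (k+1) * ‖omega k‖) := by
          apply ENNReal.ofReal_le_ofReal
          rw [hh m]
          refine (norm_sum_le _ _).trans (Finset.sum_le_sum fun k _ => ?_)
          rw [norm_smul, Real.norm_eq_abs, abs_of_nonneg (hqnn k)]
      _ = ∑ k ∈ Finset.range m, ENNReal.ofReal (qfun P f (k+1) * ‖omega k‖) :=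
          ENNReal.ofReal_sum_of_nonneg fun k _ => mul_nonneg (hqnn k) (norm_nonneg _)
      _ ≤ ∑ k ∈ Finset.range m,
            ENNReal.ofReal (qfun P f (k+1)) * rho P (Gset P f (k+1)) :=
          Finset.sum_le_sum fun k _ => hterm k
      _ ≤ theta P f := ENNReal.sum_le_tsum _
  -- main convergence statement
  have hkey : theta P f ≠ ⊤ → Tendsto h atTop (nhds f) := by
    intro hθ
    have hsum1 : ∑' k, ENNReal.ofReal (qfun P f (k+1) * ‖omega k‖) ≠ ⊤ :=
      ne_top_of_le_ne_top hθ (ENNReal.tsum_le_tsum hterm)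
    have hsumt : Summable (fun k => qfun P f (k+1) * ‖omega k‖) :=
      (ENNReal.summable_toReal hsum1).congr fun k =>
        ENNReal.toReal_ofReal (mul_nonneg (hqnn k) (norm_nonneg _))
    have hsummu : Summable (fun k => qfun P f (k+1) • omega k) := by
      apply Summable.of_norm
      exact hsumt.congr fun k => by
        rw [norm_smul, Real.norm_eq_abs, abs_of_nonneg (hqnn k)]
    obtain ⟨F, hF⟩ := hsummu
    have hhF : Tendsto h atTop (nhds F) :=
      (hF.tendsto_sum_nat).congr fun m => (hh m).symm
    suffices hFf : F = f by rw [← hFf]; exact hhF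
    -- componentwise equality
    have hcomp : ∀ γ, Pstar P γ F = Pstar P γ f := by
      intro γ
      have hTc : Tendsto (fun m => Pstar P γ (h m)) atTop (nhds (Pstar P γ F)) :=
        ((T γ).continuous.tendsto F).comp hhF
      by_cases h0 : Pstar P γ f = 0
      · have hz : ∀ m, Pstar P γ (h m) = 0 := by
          intro m
          rw [hh_comp m γ]
          refine Finset.sum_eq_zero fun k _ => ?_
          rw [if_neg (fun hmem => hmem.1 h0), smul_zero]
        have : Tendsto (fun _ : ℕ => (0 : StrongDual ℝ X)) atTop (nhds (Pstar P γ F)) :=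
          hTc.congr fun m => hz m
        rw [h0]
        exact (tendsto_nhds_unique this tendsto_const_nhds)
      · obtain ⟨j, hj1, hpj, hmin⟩ := exists_level P f hbddr hranfin h0
        set v : ℝ := ‖Pstar P γ f‖ with hvdef
        have hvne : v ≠ 0 := norm_ne_zero_iff.mpr h0
        have hcm : ∀ m, Pstar P γ (h m) =
            (v - pfun P f (max j (m+1))) • (v⁻¹ • Pstar P γ f) := by
          intro m
          rw [hh_comp m γ, ← coef_sum P f v j hj1 hpj hmin m, Finset.sum_smul]
          refine Finset.sum_congr rfl fun k _ => ?_
          by_cases hk : γ ∈ Gset P f (k+1)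
          · rw [if_pos hk, if_pos hk.2, mul_one]
          · have hnk : ¬ pfun P f (k+1) ≤ v := fun hle => hk ⟨h0, hle⟩
            rw [if_neg hk, if_neg hnk, mul_zero, zero_smul, smul_zero]
        have hptend : Tendsto (fun m : ℕ => pfun P f (max j (m+1))) atTop (nhds 0) := by
          apply (pfun_tendsto P f hbddr hranfin).comp
          apply tendsto_atTop_mono (fun m => le_max_right j (m+1))
          exact tendsto_add_atTop_nat 1
        have hlim : Tendsto (fun m => (v - pfun P f (max j (m+1))) • (v⁻¹ • Pstar P γ f))
            atTop (nhds ((v - 0) • (v⁻¹ • Pstar P γ f))) :=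
          (tendsto_const_nhds.sub hptend).smul_const _
        have heval : (v - 0) • (v⁻¹ • Pstar P γ f) = Pstar P γ f := by
          rw [sub_zero, smul_smul, mul_inv_cancel₀ hvne, one_smul]
        rw [heval] at hlim
        have h1 : Tendsto (fun m => (v - pfun P f (max j (m+1))) • (v⁻¹ • Pstar P γ f))
            atTop (nhds (Pstar P γ F)) := hTc.congr fun m => hcm m
        exact tendsto_nhds_unique h1 hlim
    -- conclude F = f from density of the ranges
    have hker : ∀ x, (F - f) x = 0 := by
      have hγ0 : ∀ γ, (F - f).comp (P γ) = 0 := by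
        intro γ
        rw [ContinuousLinearMap.sub_comp]
        exact sub_eq_zero.mpr (hcomp γ)
      have hle : Submodule.span ℝ (⋃ γ, Set.range (P γ)) ≤ LinearMap.ker ((F - f : X →L[ℝ] ℝ) : X →ₗ[ℝ] ℝ) := by
        rw [Submodule.span_le]
        rintro x ⟨_, ⟨γ, rfl⟩, y, rfl⟩
        have := congrArg (fun u : X →L[ℝ] ℝ => u y) (hγ0 γ)
        simpa using this
      have htop := Submodule.topologicalClosure_minimal _ hle
        (ContinuousLinearMap.isClosed_ker (F - f))
      rw [hspanX] at htop
      intro x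
      exact LinearMap.mem_ker.mp (htop Submodule.mem_top)
    ext x
    have := hker x
    rw [ContinuousLinearMap.sub_apply, sub_eq_zero] at this
    exact this
  refine ⟨?_, fun hθ => ?_⟩
  · by_cases hθ : theta P f = ⊤
    · rw [hθ]; exact le_top
    · have hhf := hkey hθ
      have hlim : Tendsto (fun m => ENNReal.ofReal ‖h m‖) atTop
          (nhds (ENNReal.ofReal ‖f‖)) :=
        (ENNReal.continuous_ofReal.tendsto _).comp hhf.norm
      exact le_of_tendsto hlim (Filter.Eventually.of_forall hhm_le)
  · have hhf := hkey hθ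
    have h2 : Tendsto (fun m => ‖h m - f‖) atTop (nhds 0) :=
      tendsto_iff_norm_sub_tendsto_zero.mp hhf
    simpa [norm_sub_rev] using h2
end

section
/- With the same set-up, if $f\in X^*$ satisfies $\theta(f) < \infty$ and $m\in\mathbb{N}$, then there exist $\lambda_n \ge 0$ for $n > m$ with $\sum_{n=m+1}^\infty \lambda_n = 1$ and $f = \sum_{n=m+1}^\infty \lambda_n j_{m,n}(f)$, where $j_{m,n}(f) = h_m(f) + g_{m,n}(f)$ and $g_{m,n}(f) = \frac{\theta(f-h_m(f))}{\rho(G_n(f))}\omega_n(f)$ if $p_n(f)>0$ and $g_{m,n}(f)=0$ otherwise. -/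
open Filter
open scoped ENNReal NNReal

section AuxCCA

open Filter
open scoped ENNReal NNReal Classical

noncomputable section
variable {X : Type*} [NormedAddCommGroup X] [NormedSpace ℝ X] {Γ : Type*} (P : Γ → X →L[ℝ] X)

lemma pstar_pstar (hproj : ∀ γ, (P γ).comp (P γ) = P γ)
    (hdisj : ∀ α β, α ≠ β → (P α).comp (P β) = 0) (g : StrongDual ℝ X) (γ α : Γ) :
    Pstar P γ (Pstar P α g) = if α = γ then Pstar P α g else 0 := by
  unfold Pstar
  rw [ContinuousLinearMap.comp_assoc]
  split
  · next h => rw [h, hproj]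
  · next h => rw [hdisj α γ h, ContinuousLinearMap.comp_zero]

def PstarL (γ : Γ) : StrongDual ℝ X →L[ℝ] StrongDual ℝ X :=
  LinearMap.mkContinuous
    { toFun := fun g => Pstar P γ g
      map_add' := fun a b => ContinuousLinearMap.add_comp a b (P γ)
      map_smul' := fun c a => ContinuousLinearMap.smul_comp c a (P γ) }
    ‖P γ‖ (fun g => by
      simpa [Pstar, mul_comm] using ContinuousLinearMap.opNorm_comp_le g (P γ))

@[simp] lemma PstarL_apply (γ : Γ) (g : StrongDual ℝ X) : PstarL P γ g = Pstar P γ g := rfl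

lemma pstar_smul (γ : Γ) (c : ℝ) (g : StrongDual ℝ X) :
    Pstar P γ (c • g) = c • Pstar P γ g := ContinuousLinearMap.smul_comp c g (P γ)

lemma pstar_sub (γ : Γ) (a b : StrongDual ℝ X) :
    Pstar P γ (a - b) = Pstar P γ a - Pstar P γ b := map_sub (PstarL P γ) a b

lemma pstar_zero (γ : Γ) : Pstar P γ (0 : StrongDual ℝ X) = 0 :=
  map_zero (PstarL P γ)

lemma norm_pstar_le (γ : Γ) (g : StrongDual ℝ X) :
    ‖Pstar P γ g‖ ≤ ‖g‖ * ‖P γ‖ := ContinuousLinearMap.opNorm_comp_le g (P γ)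

lemma finite_supp
    (hspan_dual : (Submodule.span ℝ
        (⋃ γ, Set.range (fun f : StrongDual ℝ X => f.comp (P γ)))).topologicalClosure = ⊤)
    (hproj : ∀ γ, (P γ).comp (P γ) = P γ)
    (hdisj : ∀ α β, α ≠ β → (P α).comp (P β) = 0)
    (hbdd : ∃ C : ℝ, ∀ γ, ‖P γ‖ ≤ C)
    (g : StrongDual ℝ X) {ε : ℝ} (hε : 0 < ε) :
    {γ | ε ≤ ‖Pstar P γ g‖}.Finite := by
  obtain ⟨C, hC⟩ := hbdd
  set C' := max C 0 with hC'
  have hC'0 : 0 ≤ C' := le_max_right _ _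
  have hC'' : ∀ γ, ‖P γ‖ ≤ C' := fun γ => le_trans (hC γ) (le_max_left _ _)
  have key : ∀ y ∈ Submodule.span ℝ (⋃ γ, Set.range
      (fun f : StrongDual ℝ X => f.comp (P γ))), {γ | Pstar P γ y ≠ 0}.Finite := by
    intro y hy
    induction hy using Submodule.span_induction with
    | mem x hx =>
      obtain ⟨α, hα⟩ := Set.mem_iUnion.1 hx
      obtain ⟨f0, rfl⟩ := hα
      refine (Set.finite_singleton α).subset (fun γ hγ => ?_)
      simp only [Set.mem_setOf_eq] at hγ
      by_contra hne
      simp only [Set.mem_singleton_iff] at hne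
      exact hγ (by
        show Pstar P γ (Pstar P α f0) = 0
        rw [pstar_pstar P hproj hdisj f0 γ α, if_neg (fun h => hne h.symm)])
    | zero =>
      refine Set.finite_empty.subset (fun γ hγ => ?_)
      simp only [Set.mem_setOf_eq] at hγ
      exact hγ (pstar_zero P γ)
    | add x y hx hy ihx ihy =>
      refine (ihx.union ihy).subset (fun γ hγ => ?_)
      simp only [Set.mem_setOf_eq] at hγ
      by_contra hc
      simp only [Set.mem_union, Set.mem_setOf_eq, not_or, not_not] at hc
      exact hγ (by show Pstar P γ (x + y) = 0
                   rw [show Pstar P γ (x+y) = Pstar P γ x + Pstar P γ y from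
                     ContinuousLinearMap.add_comp x y (P γ), hc.1, hc.2, add_zero])
    | smul a x hx ih =>
      refine ih.subset (fun γ hγ => ?_)
      simp only [Set.mem_setOf_eq] at hγ
      by_contra hc
      simp only [Set.mem_setOf_eq, not_not] at hc
      exact hγ (by show Pstar P γ (a • x) = 0; rw [pstar_smul, hc, smul_zero])
  have hg : g ∈ closure ((Submodule.span ℝ (⋃ γ, Set.range
      (fun f : StrongDual ℝ X => f.comp (P γ)))) : Set _) := by
    have h1 : g ∈ (Submodule.span ℝ (⋃ γ, Set.range
        (fun f : StrongDual ℝ X => f.comp (P γ)))).topologicalClosure := by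
      rw [hspan_dual]; trivial
    exact h1
  rw [Metric.mem_closure_iff] at hg
  obtain ⟨y, hy, hdy⟩ := hg (ε / (C' + 1)) (by positivity)
  refine (key y hy).subset (fun γ hγ => ?_)
  simp only [Set.mem_setOf_eq] at hγ ⊢
  intro h0
  have h1 : ‖Pstar P γ g‖ = ‖Pstar P γ (g - y)‖ := by rw [pstar_sub, h0, sub_zero]
  have h2 : ‖Pstar P γ (g - y)‖ ≤ ‖g - y‖ * C' :=
    le_trans (norm_pstar_le P γ _) (by nlinarith [norm_nonneg (g - y), hC'' γ])
  have h3 : ‖g - y‖ < ε / (C' + 1) := by rwa [dist_eq_norm] at hdy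
  have h4 : ‖Pstar P γ g‖ < ε := by
    rw [h1]
    calc ‖Pstar P γ (g - y)‖ ≤ ‖g - y‖ * C' := h2
    _ < ε := by
        have h5 : ‖g - y‖ * (C' + 1) < ε := (lt_div_iff₀ (by positivity : (0:ℝ) < C'+1)).1 h3
        nlinarith [norm_nonneg (g - y)]
  linarith [hγ]

variable (g : StrongDual ℝ X)

def Van (g : StrongDual ℝ X) : Prop :=
  ∀ ε : ℝ, 0 < ε → {γ | ε ≤ ‖Pstar P γ g‖}.Finite

lemma ran_pos {r : ℝ} (hr : r ∈ ranSet P g) : 0 < r := by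
  obtain ⟨γ, h1, rfl⟩ := hr
  exact norm_pos_iff.2 h1

lemma finite_ran_ge (hvan : Van P g) {ε : ℝ} (hε : 0 < ε) :
    {r | r ∈ ranSet P g ∧ ε ≤ r}.Finite := by
  refine ((hvan ε hε).image (fun γ => ‖Pstar P γ g‖)).subset (fun r hr => ?_)
  obtain ⟨⟨γ, h1, rfl⟩, h2⟩ := hr
  exact ⟨γ, h2, rfl⟩

lemma bddAbove_ran (hvan : Van P g) : BddAbove (ranSet P g) := by
  have h1 : ranSet P g ⊆ {r | r ∈ ranSet P g ∧ 1 ≤ r} ∪ Set.Iio 1 := by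
    intro r hr
    rcases le_or_gt 1 r with h | h
    · exact Or.inl ⟨hr, h⟩
    · exact Or.inr h
  exact (((finite_ran_ge P g hvan one_pos).bddAbove).union bddAbove_Iio).mono h1

lemma sSup_mem_of_pos (hvan : Van P g) {S : Set ℝ} (hS : S ⊆ ranSet P g)
    (h : 0 < sSup S) : sSup S ∈ S := by
  have hbS : BddAbove S := (bddAbove_ran P g hvan).mono hS
  have hne : S.Nonempty := by
    by_contra h'
    rw [Set.not_nonempty_iff_eq_empty] at h'
    rw [h', Real.sSup_empty] at h
    exact lt_irrefl 0 h
  obtain ⟨r0, hr0S, hr0⟩ := exists_lt_of_lt_csSup hne (by linarith : sSup S / 2 < sSup S)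
  set S' := {r | r ∈ S ∧ sSup S / 2 ≤ r} with hS'
  have hS'fin : S'.Finite :=
    (finite_ran_ge P g hvan (half_pos h)).subset (fun r hr => ⟨hS hr.1, hr.2⟩)
  have hS'ne : S'.Nonempty := ⟨r0, hr0S, le_of_lt hr0⟩
  obtain ⟨M, hMS', hMmax'⟩ := Set.Finite.exists_maximalFor id S' hS'fin hS'ne
  have hMmax : ∀ r ∈ S', M ≤ r → M = r := fun r hr h => le_antisymm h (hMmax' hr h)
  have hub : ∀ r ∈ S, r ≤ M := by
    intro r hr
    by_cases h' : sSup S / 2 ≤ r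
    · rcases le_or_gt r M with h'' | h''
      · exact h''
      · exact le_of_eq (hMmax r ⟨hr, h'⟩ (le_of_lt h'')).symm
    · push_neg at h'
      calc r ≤ sSup S / 2 := le_of_lt h'
      _ ≤ r0 := le_of_lt hr0
      _ ≤ M := by
          rcases le_or_gt r0 M with h'' | h''
          · exact h''
          · exact le_of_eq (hMmax r0 ⟨hr0S, le_of_lt hr0⟩ (le_of_lt h'')).symm
  have h1 : sSup S ≤ M := csSup_le hne hub
  have h2 : M ≤ sSup S := le_csSup hbS hMS'.1
  have h3 : sSup S = M := le_antisymm h1 h2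
  rw [h3]; exact hMS'.1

lemma p_nonneg (k : ℕ) : 0 ≤ pfun P g k := by
  match k with
  | 0 => exact le_refl 0
  | 1 => exact Real.sSup_nonneg (fun r hr => le_of_lt (ran_pos P g hr))
  | (k+2) => exact Real.sSup_nonneg (fun r hr => le_of_lt (ran_pos P g hr.1))

lemma p_mem (hvan : Van P g) {k : ℕ} (h : 0 < pfun P g (k+1)) :
    pfun P g (k+1) ∈ ranSet P g := by
  match k with
  | 0 => exact sSup_mem_of_pos P g hvan (le_refl _) h
  | (k+1) => exact (sSup_mem_of_pos P g hvan (fun r hr => hr.1) h).1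

lemma p_lt (hvan : Van P g) {k : ℕ} (h : 0 < pfun P g (k+2)) :
    pfun P g (k+2) < pfun P g (k+1) :=
  (sSup_mem_of_pos P g hvan (fun r (hr : r ∈ _) => hr.1) h).2

lemma p_succ_le (hvan : Van P g) (k : ℕ) : pfun P g (k+2) ≤ pfun P g (k+1) := by
  rcases lt_or_ge 0 (pfun P g (k+2)) with h | h
  · exact le_of_lt (p_lt P g hvan h)
  · exact le_trans h (p_nonneg P g (k+1))

lemma p_anti (hvan : Van P g) : ∀ {a b : ℕ}, 1 ≤ a → a ≤ b → pfun P g b ≤ pfun P g a := by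
  have step : ∀ (a c : ℕ), 1 ≤ a → pfun P g (a + c) ≤ pfun P g a := by
    intro a c ha
    induction c with
    | zero => exact le_refl _
    | succ n ih =>
      have h1 := p_succ_le P g hvan (a + n - 1)
      rw [show a + n - 1 + 2 = a + (n + 1) by omega, show a + n - 1 + 1 = a + n by omega] at h1
      exact le_trans h1 ih
  intro a b ha hab
  have := step a (b - a) ha
  rwa [show a + (b - a) = b by omega] at this

lemma p_strict (hvan : Van P g) {a b : ℕ} (ha : 1 ≤ a) (hab : a < b)
    (hb : 0 < pfun P g b) : pfun P g b < pfun P g a := by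
  obtain ⟨b', rfl⟩ : ∃ b', b = b' + 2 := ⟨b - 2, by omega⟩
  have h1 : pfun P g (b'+2) < pfun P g (b'+1) := p_lt P g hvan hb
  rcases Nat.lt_or_ge a (b'+1) with h | h
  · have h2 : pfun P g (b'+1) ≤ pfun P g a := p_anti P g hvan ha (Nat.le_of_lt_succ (by omega))
    linarith
  · have : a = b' + 1 := by omega
    rw [this]; exact h1

lemma p_inj (hvan : Van P g) {a b : ℕ} (ha : 1 ≤ a) (hb : 1 ≤ b)
    (hpa : 0 < pfun P g a) (hpb : 0 < pfun P g b) (h : pfun P g a = pfun P g b) : a = b := by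
  rcases Nat.lt_trichotomy a b with h' | h' | h'
  · exact absurd h (ne_of_gt (by simpa [h] using p_strict P g hvan ha h' hpb)).symm
  · exact h'
  · exact absurd h (ne_of_lt (by simpa [h] using p_strict P g hvan hb h' hpa)).symm

lemma le_p_one (hvan : Van P g) {r : ℝ} (hr : r ∈ ranSet P g) : r ≤ pfun P g 1 :=
  le_csSup (bddAbove_ran P g hvan) hr

lemma le_succ_of_lt (hvan : Van P g) {r : ℝ} {k : ℕ} (hr : r ∈ ranSet P g)
    (h : r < pfun P g (k+1)) : r ≤ pfun P g (k+2) :=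
  le_csSup ((bddAbove_ran P g hvan).mono (fun x (hx : x ∈ _) => hx.1)) ⟨hr, h⟩

lemma p_small (hvan : Van P g) {ε : ℝ} (hε : 0 < ε) :
    ∃ N : ℕ, ∀ k, N ≤ k → pfun P g (k+1) < ε := by
  have hex : ∃ k : ℕ, pfun P g (k+1) < ε := by
    by_contra hc
    push_neg at hc
    set F := (finite_ran_ge P g hvan hε).toFinset with hF
    have hmem : ∀ i : Fin (F.card + 1), pfun P g (i+1) ∈ F := by
      intro i
      rw [Set.Finite.mem_toFinset]
      exact ⟨p_mem P g hvan (lt_of_lt_of_le hε (hc i)), hc i⟩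
    have hinj : Set.InjOn (fun i : Fin (F.card + 1) => pfun P g (i+1))
        ↑(Finset.univ : Finset (Fin (F.card + 1))) := by
      intro i _ j _ hij
      have := p_inj P g hvan (Nat.le_add_left 1 i) (Nat.le_add_left 1 j)
        (lt_of_lt_of_le hε (hc i)) (lt_of_lt_of_le hε (hc j)) hij
      exact Fin.ext (by omega)
    have := Finset.card_le_card_of_injOn _ (fun i _ => hmem i) hinj
    simp only [Finset.card_univ, Fintype.card_fin] at this
    omega
  obtain ⟨N, hN⟩ := hex
  exact ⟨N, fun k hk => lt_of_le_of_lt (p_anti P g hvan (Nat.le_add_left 1 N) (by omega)) hN⟩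

lemma level (hvan : Van P g) {γ : Γ} (hγ : Pstar P γ g ≠ 0) :
    ∃ j : ℕ, ‖Pstar P γ g‖ = pfun P g (j+1) := by
  set r := ‖Pstar P γ g‖ with hr
  have hrpos : 0 < r := norm_pos_iff.2 hγ
  have hrmem : r ∈ ranSet P g := ⟨γ, hγ, rfl⟩
  obtain ⟨N, hN⟩ := p_small P g hvan hrpos
  set j := Nat.findGreatest (fun k => r ≤ pfun P g (k+1)) N with hj
  have hspec : r ≤ pfun P g (j+1) :=
    Nat.findGreatest_spec (P := fun k => r ≤ pfun P g (k+1)) (Nat.zero_le N)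
      (le_p_one P g hvan hrmem)
  have hjN : j < N := by
    by_contra hc
    push_neg at hc
    exact absurd hspec (not_le.2 (hN j hc))
  have hnot : ¬ (r ≤ pfun P g (j+2)) := by
    exact Nat.findGreatest_is_greatest (P := fun k => r ≤ pfun P g (k+1))
      (show j < j + 1 by omega) (by omega : j + 1 ≤ N)
  refine ⟨j, le_antisymm hspec ?_⟩
  by_contra hc
  push_neg at hc
  exact hnot (le_succ_of_lt P g hvan hrmem hc)

lemma mem_Gset_iff (hvan : Van P g) {γ : Γ} (hγ : Pstar P γ g ≠ 0) {j : ℕ}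
    (hj : ‖Pstar P γ g‖ = pfun P g (j+1)) (k : ℕ) :
    (Pstar P γ g ≠ 0 ∧ pfun P g (k+1) ≤ ‖Pstar P γ g‖) ↔ j ≤ k := by
  have hpos : 0 < pfun P g (j+1) := hj ▸ norm_pos_iff.2 hγ
  constructor
  · rintro ⟨-, hle⟩
    by_contra hc
    push_neg at hc
    have := p_strict P g hvan (Nat.le_add_left 1 k) (by omega : k + 1 < j + 1) hpos
    rw [← hj] at this
    linarith [hle]
  · intro hk
    exact ⟨hγ, by rw [hj]; exact p_anti P g hvan (Nat.le_add_left 1 j) (by omega)⟩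

lemma q_nonneg (hvan : Van P g) (k : ℕ) : 0 ≤ qfun P g (k+1) :=
  sub_nonneg.2 (p_succ_le P g hvan k)

end
end AuxCCA

section AuxCCA2

open Filter
open scoped ENNReal NNReal Classical

noncomputable section
variable {X : Type*} [NormedAddCommGroup X] [NormedSpace ℝ X] {Γ : Type*} (P : Γ → X →L[ℝ] X)

lemma le_rho {A : Set Γ} (S : Finset Γ) (hS : ↑S ⊆ A) (f0 : StrongDual ℝ X)
    (hf0 : ∀ γ ∈ S, ‖Pstar P γ f0‖ ≤ 1) :
    ENNReal.ofReal ‖∑ γ ∈ S, Pstar P γ f0‖ ≤ rho P A :=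
  le_iSup_of_le S (le_iSup_of_le hS (le_iSup_of_le f0 (le_iSup_of_le hf0 le_rfl)))

lemma norm_unit {u : StrongDual ℝ X} (hu : u ≠ 0) : ‖(‖u‖⁻¹ • u)‖ = 1 := by
  rw [norm_smul, norm_inv, norm_norm, inv_mul_cancel₀ (norm_ne_zero_iff.2 hu)]

lemma one_le_rho (g : StrongDual ℝ X) (hvan : Van P g) {n : ℕ}
    (hp : 0 < pfun P g (n+1)) : 1 ≤ rho P (Gset P g (n+1)) := by
  obtain ⟨γ, hγ, hnorm⟩ := p_mem P g hvan hp
  have hmem : γ ∈ Gset P g (n+1) := ⟨hγ, le_of_eq hnorm.symm⟩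
  set f0 := ‖Pstar P γ g‖⁻¹ • g with hf0
  have hcomp : ∀ α, Pstar P α f0 = ‖Pstar P γ g‖⁻¹ • Pstar P α g := fun α => pstar_smul P α _ g
  have hb : ∀ α ∈ ({γ} : Finset Γ), ‖Pstar P α f0‖ ≤ 1 := by
    intro α hα
    rw [Finset.mem_singleton] at hα
    subst hα
    rw [hcomp, norm_unit hγ]
  have h1 := le_rho P ({γ} : Finset Γ) (by simpa using hmem) f0 hb
  rw [Finset.sum_singleton, hcomp, norm_unit hγ] at h1
  simpa using h1

variable [CompleteSpace X]
variable (f : StrongDual ℝ X) (hGfin : ∀ k : ℕ, (Gset P f (k + 1)).Finite)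
  (omega : ℕ → StrongDual ℝ X)

lemma omega_comp (hproj : ∀ γ, (P γ).comp (P γ) = P γ)
    (hdisj : ∀ α β, α ≠ β → (P α).comp (P β) = 0)
    (homega : ∀ k : ℕ,
      omega (k + 1) = ∑ γ ∈ (hGfin k).toFinset, ‖Pstar P γ f‖⁻¹ • Pstar P γ f)
    (k : ℕ) (γ : Γ) :
    Pstar P γ (omega (k+1))
      = if γ ∈ (hGfin k).toFinset then ‖Pstar P γ f‖⁻¹ • Pstar P γ f else 0 := by
  have hterm : ∀ α ∈ (hGfin k).toFinset,
      Pstar P γ (‖Pstar P α f‖⁻¹ • Pstar P α f)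
        = if α = γ then ‖Pstar P α f‖⁻¹ • Pstar P α f else 0 := by
    intro α _
    rw [pstar_smul, pstar_pstar P hproj hdisj f γ α]
    split
    · rfl
    · rw [smul_zero]
  calc Pstar P γ (omega (k+1))
      = ∑ α ∈ (hGfin k).toFinset, Pstar P γ (‖Pstar P α f‖⁻¹ • Pstar P α f) := by
        rw [homega k]
        exact map_sum (PstarL P γ) _ _
  _ = ∑ α ∈ (hGfin k).toFinset, if α = γ then ‖Pstar P α f‖⁻¹ • Pstar P α f else 0 :=
        Finset.sum_congr rfl hterm
  _ = if γ ∈ (hGfin k).toFinset then ‖Pstar P γ f‖⁻¹ • Pstar P γ f else 0 :=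
        Finset.sum_ite_eq' _ γ _

lemma ofReal_norm_omega_le (hproj : ∀ γ, (P γ).comp (P γ) = P γ)
    (hdisj : ∀ α β, α ≠ β → (P α).comp (P β) = 0)
    (homega : ∀ k : ℕ,
      omega (k + 1) = ∑ γ ∈ (hGfin k).toFinset, ‖Pstar P γ f‖⁻¹ • Pstar P γ f)
    (k : ℕ) : ENNReal.ofReal ‖omega (k+1)‖ ≤ rho P (Gset P f (k+1)) := by
  have hsum : ∑ γ ∈ (hGfin k).toFinset, Pstar P γ (omega (k+1)) = omega (k+1) := by
    rw [Finset.sum_congr rfl (fun γ hγ => by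
      rw [omega_comp P f hGfin omega hproj hdisj homega k γ, if_pos hγ])]
    exact (homega k).symm
  have hbd : ∀ γ ∈ (hGfin k).toFinset, ‖Pstar P γ (omega (k+1))‖ ≤ 1 := by
    intro γ hγ
    rw [omega_comp P f hGfin omega hproj hdisj homega k γ, if_pos hγ]
    have hne : Pstar P γ f ≠ 0 := ((hGfin k).mem_toFinset.1 hγ).1
    rw [norm_unit hne]
  have h1 := le_rho P (hGfin k).toFinset (by rw [Set.Finite.coe_toFinset]) (omega (k+1)) hbd
  rwa [hsum] at h1

lemma tele (j : ℕ) : ∀ n, j ≤ n →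
    ∑ k ∈ Finset.range n, (if j ≤ k then qfun P f (k+1) else 0)
      = pfun P f (j+1) - pfun P f (n+1) := by
  intro n hn
  induction n, hn using Nat.le_induction with
  | base =>
    rw [Finset.sum_eq_zero (fun k hk => if_neg (by rw [Finset.mem_range] at hk; omega))]
    simp
  | succ n hn ih =>
    rw [Finset.sum_range_succ, ih, if_pos hn]
    show _ = pfun P f (j+1) - pfun P f (n+2)
    have : qfun P f (n+1) = pfun P f (n+1) - pfun P f (n+2) := rfl
    rw [this]; ring

lemma hasSum_main
    (hproj : ∀ γ, (P γ).comp (P γ) = P γ)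
    (hdisj : ∀ α β, α ≠ β → (P α).comp (P β) = 0)
    (hbdd : ∃ C : ℝ, ∀ γ, ‖P γ‖ ≤ C)
    (hspanX : (Submodule.span ℝ (⋃ γ, Set.range (P γ))).topologicalClosure = ⊤)
    (hspan_dual : (Submodule.span ℝ
        (⋃ γ, Set.range (fun f : StrongDual ℝ X => f.comp (P γ)))).topologicalClosure = ⊤)
    (htheta : theta P f ≠ ⊤)
    (homega : ∀ k : ℕ,
      omega (k + 1) = ∑ γ ∈ (hGfin k).toFinset, ‖Pstar P γ f‖⁻¹ • Pstar P γ f) :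
    HasSum (fun k => qfun P f (k+1) • omega (k+1)) f := by
  have hvan : Van P f := fun ε hε => finite_supp P hspan_dual hproj hdisj hbdd f hε
  set s : ℕ → StrongDual ℝ X := fun k => qfun P f (k+1) • omega (k+1) with hs
  have hatot : ∑' k, ENNReal.ofReal (qfun P f (k+1)) * rho P (Gset P f (k+1)) ≠ ⊤ := htheta
  have ane : ∀ k, ENNReal.ofReal (qfun P f (k+1)) * rho P (Gset P f (k+1)) ≠ ⊤ :=
    ENNReal.ne_top_of_tsum_ne_top hatot
  have hqnn : ∀ k, 0 ≤ qfun P f (k+1) := fun k => q_nonneg P f hvan k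
  have hnorm_le : ∀ k, ‖s k‖
      ≤ (ENNReal.ofReal (qfun P f (k+1)) * rho P (Gset P f (k+1))).toReal := by
    intro k
    rcases eq_or_lt_of_le (hqnn k) with hq | hq
    · have : s k = 0 := by rw [hs]; simp [← hq]
      rw [this, norm_zero]
      exact ENNReal.toReal_nonneg
    · have hρne : rho P (Gset P f (k+1)) ≠ ⊤ := by
        intro hcc
        apply ane k
        rw [hcc, ENNReal.mul_top]
        simp only [ne_eq, ENNReal.ofReal_eq_zero, not_le]
        exact hq
      have h1 : ‖omega (k+1)‖ ≤ (rho P (Gset P f (k+1))).toReal :=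
        (ENNReal.ofReal_le_iff_le_toReal hρne).1
          (ofReal_norm_omega_le P f hGfin omega hproj hdisj homega k)
      rw [ENNReal.toReal_mul, ENNReal.toReal_ofReal (le_of_lt hq)]
      have h2 : ‖s k‖ = qfun P f (k+1) * ‖omega (k+1)‖ := by
        rw [hs]
        simp only
        rw [norm_smul, Real.norm_eq_abs, abs_of_nonneg (hqnn k)]
      rw [h2]
      exact mul_le_mul_of_nonneg_left h1 (le_of_lt hq)
  have hsummable : Summable s :=
    Summable.of_norm_bounded (ENNReal.summable_toReal hatot) hnorm_le
  have hL : HasSum s (∑' k, s k) := hsummable.hasSum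
  suffices hLf : (∑' k, s k) = f by rwa [hLf] at hL
  have hcomp : ∀ γ, Pstar P γ (∑' k, s k) = Pstar P γ f := by
    intro γ
    have h1 : HasSum (fun k => Pstar P γ (s k)) (Pstar P γ (∑' k, s k)) := by
      simpa using (PstarL P γ).hasSum hL
    by_cases hγ : Pstar P γ f = 0
    · have hterm : ∀ k, Pstar P γ (s k) = 0 := by
        intro k
        rw [hs]
        simp only
        rw [pstar_smul, omega_comp P f hGfin omega hproj hdisj homega k γ,
          if_neg (fun hmem => (((hGfin k).mem_toFinset.1 hmem).1 : Pstar P γ f ≠ 0) hγ),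
          smul_zero]
      rw [hγ]
      have h2 : HasSum (fun _ : ℕ => (0 : StrongDual ℝ X)) (Pstar P γ (∑' k, s k)) := by
        have : (fun k => Pstar P γ (s k)) = fun _ : ℕ => (0 : StrongDual ℝ X) :=
          funext hterm
        rwa [this] at h1
      exact h2.unique hasSum_zero
    · obtain ⟨j, hj⟩ := level P f hvan hγ
      set v := ‖Pstar P γ f‖⁻¹ • Pstar P γ f with hv
      set c : ℕ → ℝ := fun k => if j ≤ k then qfun P f (k+1) else 0 with hc
      have hterm : ∀ k, Pstar P γ (s k) = c k • v := by
        intro k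
        rw [hs]
        simp only
        rw [pstar_smul, omega_comp P f hGfin omega hproj hdisj homega k γ]
        simp only [hc]
        by_cases hmem : γ ∈ (hGfin k).toFinset
        · rw [if_pos hmem,
            if_pos ((mem_Gset_iff P f hvan hγ hj k).1 ((hGfin k).mem_toFinset.1 hmem))]
        · rw [if_neg hmem,
            if_neg (fun hjk => hmem ((hGfin k).mem_toFinset.2
              ((mem_Gset_iff P f hvan hγ hj k).2 hjk))), smul_zero, zero_smul]
      have hcnn : ∀ k, 0 ≤ c k := by
        intro k
        simp only [hc]
        split
        · exact hqnn _
        · exact le_rfl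
      have hcsum : Summable c := by
        refine summable_of_sum_range_le (c := pfun P f (j+1)) hcnn (fun n => ?_)
        rcases le_total j n with hle | hle
        · simp only [hc]
          rw [tele P f j n hle]
          have := p_nonneg P f (n+1)
          linarith
        · simp only [hc]
          rw [Finset.sum_eq_zero (fun k hk => if_neg (by
            rw [Finset.mem_range] at hk; omega))]
          exact p_nonneg P f (j+1)
      have hpt : Tendsto (fun n => pfun P f (n+1)) atTop (nhds 0) := by
        rw [Metric.tendsto_atTop]
        intro ε hε
        obtain ⟨N, hN⟩ := p_small P f hvan hε
        exact ⟨N, fun n hn => by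
          rw [Real.dist_eq, sub_zero, abs_of_nonneg (p_nonneg P f (n+1))]
          exact hN n hn⟩
      have htend : Tendsto (fun n => ∑ k ∈ Finset.range n, c k) atTop
          (nhds (pfun P f (j+1))) := by
        have h2 : Tendsto (fun n : ℕ => pfun P f (j+1) - pfun P f (n+1)) atTop
            (nhds (pfun P f (j+1))) := by
          simpa using tendsto_const_nhds.sub hpt
        refine h2.congr' ?_
        filter_upwards [eventually_ge_atTop j] with n hn
        exact (tele P f j n hn).symm
      have hcval : ∑' k, c k = pfun P f (j+1) :=
        tendsto_nhds_unique hcsum.hasSum.tendsto_sum_nat htend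
      have h2 : HasSum (fun k => c k • v) (pfun P f (j+1) • v) := by
        have h3 := hcsum.hasSum.smul_const v
        rwa [hcval] at h3
      have h3 : Pstar P γ (∑' k, s k) = pfun P f (j+1) • v := by
        refine HasSum.unique ?_ h2
        have : (fun k => Pstar P γ (s k)) = fun k => c k • v := funext hterm
        rwa [this] at h1
      rw [h3, hv, smul_smul, ← hj, mul_inv_cancel₀ (norm_ne_zero_iff.2 hγ), one_smul]
  set d := (∑' k, s k) - f with hd
  have hdcomp : ∀ γ, Pstar P γ d = 0 := fun γ => by rw [hd, pstar_sub, hcomp γ, sub_self]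
  have hker : (Submodule.span ℝ (⋃ γ, Set.range (P γ))).topologicalClosure
      ≤ LinearMap.ker (d : X →ₗ[ℝ] ℝ) := by
    apply Submodule.topologicalClosure_minimal
    · rw [Submodule.span_le]
      rintro x hx
      obtain ⟨γ, hγx⟩ := Set.mem_iUnion.1 hx
      obtain ⟨y, rfl⟩ := hγx
      have h1 : (d : X →ₗ[ℝ] ℝ) (P γ y) = Pstar P γ d y := rfl
      simp only [SetLike.mem_coe, LinearMap.mem_ker]
      rw [h1, hdcomp γ]
      rfl
    · exact ContinuousLinearMap.isClosed_ker d
  rw [hspanX] at hker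
  have hdz : ∀ x, d x = 0 := fun x => hker (Submodule.mem_top (x := x))
  have hdz' : d = 0 := ContinuousLinearMap.ext hdz
  rw [hd] at hdz'
  exact sub_eq_zero.1 hdz'

lemma pstar_fsub
    (hproj : ∀ γ, (P γ).comp (P γ) = P γ)
    (hdisj : ∀ α β, α ≠ β → (P α).comp (P β) = 0)
    (hbdd : ∃ C : ℝ, ∀ γ, ‖P γ‖ ≤ C)
    (hspan_dual : (Submodule.span ℝ
        (⋃ γ, Set.range (fun f : StrongDual ℝ X => f.comp (P γ)))).topologicalClosure = ⊤)
    (homega : ∀ k : ℕ,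
      omega (k + 1) = ∑ γ ∈ (hGfin k).toFinset, ‖Pstar P γ f‖⁻¹ • Pstar P γ f)
    (m : ℕ) (γ : Γ) :
    (Pstar P γ f = 0 ∧
      Pstar P γ (f - ∑ k ∈ Finset.range m, qfun P f (k+1) • omega (k+1)) = 0)
    ∨ (∃ j, j + 1 ≤ m ∧ ‖Pstar P γ f‖ = pfun P f (j+1) ∧ Pstar P γ f ≠ 0 ∧
        Pstar P γ (f - ∑ k ∈ Finset.range m, qfun P f (k+1) • omega (k+1))
          = pfun P f (m+1) • (‖Pstar P γ f‖⁻¹ • Pstar P γ f))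
    ∨ (∃ j, m ≤ j ∧ ‖Pstar P γ f‖ = pfun P f (j+1) ∧ Pstar P γ f ≠ 0 ∧
        Pstar P γ (f - ∑ k ∈ Finset.range m, qfun P f (k+1) • omega (k+1))
          = Pstar P γ f) := by
  have hvan : Van P f := fun ε hε => finite_supp P hspan_dual hproj hdisj hbdd f hε
  set H := ∑ k ∈ Finset.range m, qfun P f (k+1) • omega (k+1) with hH
  by_cases hγ : Pstar P γ f = 0
  · left
    refine ⟨hγ, ?_⟩
    rw [pstar_sub, hγ]
    have hPH : Pstar P γ H = 0 := by
      have : Pstar P γ H = ∑ k ∈ Finset.range m, Pstar P γ (qfun P f (k+1) • omega (k+1)) := by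
        rw [hH]; exact map_sum (PstarL P γ) _ _
      rw [this, Finset.sum_eq_zero]
      intro k _
      rw [pstar_smul, omega_comp P f hGfin omega hproj hdisj homega k γ,
        if_neg (fun hmem => (((hGfin k).mem_toFinset.1 hmem).1 : Pstar P γ f ≠ 0) hγ),
        smul_zero]
    rw [hPH, sub_zero]
  · obtain ⟨j, hj⟩ := level P f hvan hγ
    set v := ‖Pstar P γ f‖⁻¹ • Pstar P γ f with hv
    have hPH : Pstar P γ H
        = (∑ k ∈ Finset.range m, if j ≤ k then qfun P f (k+1) else 0) • v := by
      have h1 : Pstar P γ H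
          = ∑ k ∈ Finset.range m, Pstar P γ (qfun P f (k+1) • omega (k+1)) := by
        rw [hH]; exact map_sum (PstarL P γ) _ _
      rw [h1, Finset.sum_smul]
      refine Finset.sum_congr rfl (fun k _ => ?_)
      rw [pstar_smul, omega_comp P f hGfin omega hproj hdisj homega k γ]
      by_cases hmem : γ ∈ (hGfin k).toFinset
      · rw [if_pos hmem,
          if_pos ((mem_Gset_iff P f hvan hγ hj k).1 ((hGfin k).mem_toFinset.1 hmem))]
      · rw [if_neg hmem,
          if_neg (fun hjk => hmem ((hGfin k).mem_toFinset.2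
            ((mem_Gset_iff P f hvan hγ hj k).2 hjk))), smul_zero, zero_smul]
    rcases lt_or_ge j m with hjm | hjm
    · right; left
      refine ⟨j, by omega, hj, hγ, ?_⟩
      rw [pstar_sub, hPH, tele P f j m (by omega)]
      have huv : Pstar P γ f = ‖Pstar P γ f‖ • v := by
        rw [hv, smul_smul, mul_inv_cancel₀ (norm_ne_zero_iff.2 hγ), one_smul]
      calc Pstar P γ f - (pfun P f (j+1) - pfun P f (m+1)) • v
          = ‖Pstar P γ f‖ • v - (pfun P f (j+1) - pfun P f (m+1)) • v := by rw [← huv]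
      _ = pfun P f (j+1) • v - (pfun P f (j+1) - pfun P f (m+1)) • v := by rw [hj]
      _ = pfun P f (m+1) • v := by module
    · right; right
      refine ⟨j, hjm, hj, hγ, ?_⟩
      rw [pstar_sub, hPH, Finset.sum_eq_zero (fun k hk => if_neg (by
        rw [Finset.mem_range] at hk; omega)), zero_smul, sub_zero]

end
end AuxCCA2

section AuxCCA3

open Filter
open scoped ENNReal NNReal Classical

noncomputable section
variable {X : Type*} [NormedAddCommGroup X] [NormedSpace ℝ X] [CompleteSpace X]
  {Γ : Type*} (P : Γ → X →L[ℝ] X)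

lemma theta_sub
    (hproj : ∀ γ, (P γ).comp (P γ) = P γ)
    (hdisj : ∀ α β, α ≠ β → (P α).comp (P β) = 0)
    (hbdd : ∃ C : ℝ, ∀ γ, ‖P γ‖ ≤ C)
    (hspan_dual : (Submodule.span ℝ
        (⋃ γ, Set.range (fun f : StrongDual ℝ X => f.comp (P γ)))).topologicalClosure = ⊤)
    (f : StrongDual ℝ X) (hGfin : ∀ k : ℕ, (Gset P f (k + 1)).Finite)
    (omega : ℕ → StrongDual ℝ X)
    (homega : ∀ k : ℕ,
      omega (k + 1) = ∑ γ ∈ (hGfin k).toFinset, ‖Pstar P γ f‖⁻¹ • Pstar P γ f)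
    (m : ℕ) :
    theta P (f - ∑ k ∈ Finset.range m, qfun P f (k+1) • omega (k+1))
      = ∑' k : ℕ, ENNReal.ofReal (qfun P f (m+k+1)) * rho P (Gset P f (m+k+1)) := by
  have hvan : Van P f := fun ε hε => finite_supp P hspan_dual hproj hdisj hbdd f hε
  set f' := f - ∑ k ∈ Finset.range m, qfun P f (k+1) • omega (k+1) with hf'
  have hvan' : Van P f' := fun ε hε => finite_supp P hspan_dual hproj hdisj hbdd f' hε
  have tri := pstar_fsub P f hGfin omega hproj hdisj hbdd hspan_dual homega m
  have hransub : ∀ r ∈ ranSet P f', ∃ jj, m + 1 ≤ jj ∧ r = pfun P f jj := by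
    rintro r ⟨γ, hγ, rfl⟩
    rcases tri γ with ⟨h1, h2⟩ | ⟨j, hjm, hj, hne0, heq⟩ | ⟨j, hjm, hj, hne0, heq⟩
    · exact absurd h2 hγ
    · refine ⟨m+1, le_rfl, ?_⟩
      rw [heq, norm_smul, Real.norm_eq_abs, abs_of_nonneg (p_nonneg P f (m+1)),
        norm_unit hne0, mul_one]
    · exact ⟨j+1, by omega, by rw [heq, hj]⟩
  have hranmem : ∀ jj, m+1 ≤ jj → 0 < pfun P f jj → pfun P f jj ∈ ranSet P f' := by
    intro jj hjj hpos
    obtain ⟨t, rfl⟩ : ∃ t, jj = t+1 := ⟨jj - 1, by omega⟩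
    obtain ⟨γ, hne0, hnorm⟩ := p_mem P f hvan hpos
    rcases tri γ with ⟨h1, _⟩ | ⟨j, hjm, hj, _, heq⟩ | ⟨j, hjm, hj, _, heq⟩
    · exact absurd h1 hne0
    · exfalso
      have hpj : 0 < pfun P f (j+1) := by rw [← hj, hnorm]; exact hpos
      have := p_inj P f hvan (by omega : 1 ≤ j+1) (by omega : 1 ≤ t+1) hpj hpos
        (by rw [← hj, hnorm])
      omega
    · exact ⟨γ, by rw [heq]; exact hne0, by rw [heq, hnorm]⟩
  have hp' : ∀ k, pfun P f' (k+1) = pfun P f (m+k+1) := by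
    intro k
    induction k with
    | zero =>
      show sSup (ranSet P f') = pfun P f (m+1)
      by_cases hpos : 0 < pfun P f (m+1)
      · refine le_antisymm (csSup_le ⟨_, hranmem (m+1) le_rfl hpos⟩ ?_)
          (le_csSup (bddAbove_ran P f' hvan') (hranmem (m+1) le_rfl hpos))
        rintro r hr
        obtain ⟨jj, hjj, rfl⟩ := hransub r hr
        exact p_anti P f hvan (by omega) hjj
      · have hz : pfun P f (m+1) = 0 := le_antisymm (not_lt.1 hpos) (p_nonneg P f (m+1))
        have hempty : ranSet P f' = ∅ := by
          ext r
          simp only [Set.mem_empty_iff_false, iff_false]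
          intro hr
          have hrpos := ran_pos P f' hr
          obtain ⟨jj, hjj, rfl⟩ := hransub r hr
          have h2 := p_anti P f hvan (by omega : 1 ≤ m+1) hjj
          rw [hz] at h2
          linarith
        rw [hempty, Real.sSup_empty, hz]
    | succ k ih =>
      have hgoal : pfun P f' (k+2) = pfun P f (m+k+2) := by
        show sSup {r | r ∈ ranSet P f' ∧ r < pfun P f' (k+1)} = pfun P f (m+k+2)
        rw [ih]
        by_cases hpos : 0 < pfun P f (m+k+2)
        · have hmem' : pfun P f (m+k+2) ∈ {r | r ∈ ranSet P f' ∧ r < pfun P f (m+k+1)} :=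
            ⟨hranmem (m+k+2) (by omega) hpos,
             p_strict P f hvan (by omega) (by omega) hpos⟩
          refine le_antisymm (csSup_le ⟨_, hmem'⟩ ?_)
            (le_csSup ((bddAbove_ran P f' hvan').mono (fun x hx => hx.1)) hmem')
          rintro r ⟨hr, hrlt⟩
          obtain ⟨jj, hjj, rfl⟩ := hransub r hr
          have hjj2 : m+k+2 ≤ jj := by
            by_contra hcc
            push_neg at hcc
            have := p_anti P f hvan (by omega : 1 ≤ jj) (by omega : jj ≤ m+k+1)
            linarith
          exact p_anti P f hvan (by omega) hjj2
        · have hz : pfun P f (m+k+2) = 0 := le_antisymm (not_lt.1 hpos) (p_nonneg P f _)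
          have hempty : {r | r ∈ ranSet P f' ∧ r < pfun P f (m+k+1)} = ∅ := by
            ext r
            simp only [Set.mem_setOf_eq, Set.mem_empty_iff_false, iff_false, not_and]
            intro hr hrlt
            have hrpos := ran_pos P f' hr
            obtain ⟨jj, hjj, hre⟩ := hransub r hr
            have hjj2 : m+k+2 ≤ jj := by
              by_contra hcc
              push_neg at hcc
              have := p_anti P f hvan (by omega : 1 ≤ jj) (by omega : jj ≤ m+k+1)
              rw [← hre] at this
              linarith
            have := p_anti P f hvan (by omega : 1 ≤ m+k+2) hjj2
            rw [hz, ← hre] at this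
            linarith
          rw [hempty, Real.sSup_empty, hz]
      exact hgoal
  have hG' : ∀ k, 0 < pfun P f (m+k+1) → Gset P f' (k+1) = Gset P f (m+k+1) := by
    intro k hpos
    ext γ
    show (Pstar P γ f' ≠ 0 ∧ pfun P f' (k+1) ≤ ‖Pstar P γ f'‖)
      ↔ (Pstar P γ f ≠ 0 ∧ pfun P f (m+k+1) ≤ ‖Pstar P γ f‖)
    rw [hp' k]
    rcases tri γ with ⟨h1, h2⟩ | ⟨j, hjm, hj, hne0, heq⟩ | ⟨j, hjm, hj, hne0, heq⟩
    · constructor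
      · rintro ⟨hc, -⟩; exact absurd h2 hc
      · rintro ⟨hc, -⟩; exact absurd h1 hc
    · have hnorm' : ‖Pstar P γ f'‖ = pfun P f (m+1) := by
        rw [heq, norm_smul, Real.norm_eq_abs, abs_of_nonneg (p_nonneg P f (m+1)),
          norm_unit hne0, mul_one]
      have hle : pfun P f (m+k+1) ≤ pfun P f (m+1) := p_anti P f hvan (by omega) (by omega)
      constructor
      · intro _
        refine ⟨hne0, ?_⟩
        rw [hj]
        exact le_trans hle (p_anti P f hvan (by omega : 1 ≤ j+1) (by omega : j+1 ≤ m+1))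
      · intro _
        have hpos' : 0 < ‖Pstar P γ f'‖ := by rw [hnorm']; linarith
        exact ⟨norm_pos_iff.1 hpos', by rw [hnorm']; exact hle⟩
    · rw [heq]
  show theta P f' = _
  unfold theta
  refine tsum_congr (fun k => ?_)
  have hq' : qfun P f' (k+1) = qfun P f (m+k+1) := by
    show pfun P f' (k+1) - pfun P f' (k+2) = pfun P f (m+k+1) - pfun P f (m+k+2)
    rw [hp' k, hp' (k+1)]
    rfl
  rw [hq']
  by_cases hq : 0 < qfun P f (m+k+1)
  · have hppos : 0 < pfun P f (m+k+1) := by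
      have h1 := p_nonneg P f (m+k+2)
      have h2 : qfun P f (m+k+1) = pfun P f (m+k+1) - pfun P f (m+k+2) := rfl
      rw [h2] at hq
      linarith
    rw [hG' k hppos]
  · have h0 : qfun P f (m+k+1) = 0 := by
      have h1 : 0 ≤ qfun P f (m+k+1) := q_nonneg P f hvan (m+k)
      linarith [not_lt.1 hq, h1]
    rw [h0]
    simp

end
end AuxCCA3

/-- If `θ(f) < ∞` and `m ∈ ℕ`, then `f` is an infinite convex combination of the
approximating functionals `j_{m,n}(f) = h_m(f) + g_{m,n}(f)`, `n > m`, where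
`g_{m,n}(f) = (θ(f - h_m(f)) / ρ(G_n(f))) ω_n(f)` if `p_n(f) > 0` and `0` otherwise. -/
theorem convex_combination_of_approximants
    {X : Type*} [NormedAddCommGroup X] [NormedSpace ℝ X] [CompleteSpace X]
    {Γ : Type*} (P : Γ → X →L[ℝ] X)
    (hproj : ∀ γ, (P γ).comp (P γ) = P γ)
    (hne : ∀ γ, P γ ≠ 0)
    (hdisj : ∀ α β, α ≠ β → (P α).comp (P β) = 0)
    (hbdd : ∃ C : ℝ, ∀ γ, ‖P γ‖ ≤ C)
    (hspanX : (Submodule.span ℝ (⋃ γ, Set.range (P γ))).topologicalClosure = ⊤)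
    (hspan_dual : (Submodule.span ℝ
        (⋃ γ, Set.range (fun f : StrongDual ℝ X => f.comp (P γ)))).topologicalClosure = ⊤)
    (f : StrongDual ℝ X)
    (htheta : theta P f ≠ ⊤)
    (hGfin : ∀ k : ℕ, (Gset P f (k + 1)).Finite)
    (omega : ℕ → StrongDual ℝ X)
    (homega : ∀ k : ℕ,
      omega (k + 1) = ∑ γ ∈ (hGfin k).toFinset, ‖Pstar P γ f‖⁻¹ • Pstar P γ f)
    (h : ℕ → StrongDual ℝ X)
    (hh : ∀ m : ℕ, h m = ∑ k ∈ Finset.range m, qfun P f (k + 1) • omega (k + 1))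
    (g : ℕ → ℕ → StrongDual ℝ X)
    (hg : ∀ m n : ℕ, m < n →
      g m n = if 0 < pfun P f n then
          ((theta P (f - h m)).toReal / (rho P (Gset P f n)).toReal) • omega n
        else 0)
    (j : ℕ → ℕ → StrongDual ℝ X)
    (hj : ∀ m n : ℕ, m < n → j m n = h m + g m n)
    (m : ℕ) :
    ∃ lam : ℕ → ℝ, (∀ n, 0 ≤ lam n) ∧ (∀ n ≤ m, lam n = 0) ∧
      HasSum lam 1 ∧ HasSum (fun n : ℕ => lam n • j m n) f := by
  classical
  have hvan : Van P f := fun ε hε => finite_supp P hspan_dual hproj hdisj hbdd f hε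
  set a : ℕ → ℝ≥0∞ := fun i => ENNReal.ofReal (qfun P f (i+1)) * rho P (Gset P f (i+1))
    with ha
  have hatot : ∑' i, a i ≠ ⊤ := htheta
  have hane : ∀ i, a i ≠ ⊤ := ENNReal.ne_top_of_tsum_ne_top hatot
  have hs : HasSum (fun k => qfun P f (k+1) • omega (k+1)) f :=
    hasSum_main P f hGfin omega hproj hdisj hbdd hspanX hspan_dual htheta homega
  have hmain : HasSum (fun n : ℕ => qfun P f (n+m+1) • omega (n+m+1)) (f - h m) := by
    refine (hasSum_nat_add_iff (f := fun k => qfun P f (k+1) • omega (k+1)) m).2 ?_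
    have he : f - h m + ∑ i ∈ Finset.range m, qfun P f (i+1) • omega (i+1) = f := by
      rw [← hh m]; abel
    rw [he]
    exact hs
  have hts : theta P (f - h m) = ∑' k, a (m+k) := by
    rw [hh m]
    exact theta_sub P hproj hdisj hbdd hspan_dual f hGfin omega homega m
  have hfin : theta P (f - h m) ≠ ⊤ := by
    rw [hts]
    exact ne_top_of_le_ne_top hatot
      (ENNReal.tsum_comp_le_tsum_of_injective (fun x y hxy => by omega) a)
  by_cases hT : (theta P (f - h m)).toReal = 0
  · -- degenerate case : f = h m
    have hth0 : theta P (f - h m) = 0 := by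
      rcases (ENNReal.toReal_eq_zero_iff _).1 hT with h0 | h0
      · exact h0
      · exact absurd h0 hfin
    have hta : ∑' k, a (m+k) = 0 := by rw [← hts]; exact hth0
    have hq0 : ∀ k, qfun P f (m+k+1) = 0 := by
      intro k
      have h0 : a (m+k) = 0 := ENNReal.tsum_eq_zero.1 hta k
      have hqnn : 0 ≤ qfun P f (m+k+1) := q_nonneg P f hvan (m+k)
      rcases mul_eq_zero.1 h0 with h1 | h1
      · rw [ENNReal.ofReal_eq_zero] at h1
        linarith
      · by_contra hqq
        have hqpos : 0 < qfun P f (m+k+1) := lt_of_le_of_ne hqnn (Ne.symm hqq)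
        have hppos : 0 < pfun P f (m+k+1) := by
          have h2 : qfun P f (m+k+1) = pfun P f (m+k+1) - pfun P f (m+k+2) := rfl
          rw [h2] at hqpos
          linarith [p_nonneg P f (m+k+2)]
        have h3 := one_le_rho P f hvan (n := m+k) hppos
        rw [h1] at h3
        simp at h3
    have hfhm : f - h m = 0 := by
      have h2 : HasSum (fun _ : ℕ => (0 : StrongDual ℝ X)) (f - h m) := by
        have he : (fun n : ℕ => qfun P f (n+m+1) • omega (n+m+1))
            = fun _ : ℕ => (0 : StrongDual ℝ X) := by
          funext n
          rw [show n+m+1 = m+n+1 by omega, hq0 n, zero_smul]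
        rwa [he] at hmain
      exact h2.unique hasSum_zero
    have hfeq : f = h m := by
      have := sub_eq_zero.1 hfhm
      exact this
    refine ⟨fun n => if n = m+1 then 1 else 0, ?_, ?_, ?_, ?_⟩
    · intro n
      by_cases hn' : n = m+1 <;> simp [hn']
    · intro n hn
      exact if_neg (by omega)
    · exact hasSum_ite_eq (m+1) 1
    · have hjj : j m (m+1) = f := by
        rw [hj m (m+1) (by omega), hg m (m+1) (by omega)]
        split
        · rw [hT, zero_div, zero_smul, add_zero, ← hfeq]
        · rw [add_zero, ← hfeq]
      have he : (fun n : ℕ => (if n = m+1 then (1:ℝ) else 0) • j m n)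
          = fun n : ℕ => if n = m+1 then f else 0 := by
        funext n
        split
        · next h' => rw [one_smul, h', hjj]
        · rw [zero_smul]
      rw [he]
      exact hasSum_ite_eq (m+1) f
  · -- main case
    set T := (theta P (f - h m)).toReal with hTdef
    have hTpos : 0 < T := lt_of_le_of_ne ENNReal.toReal_nonneg (Ne.symm hT)
    set lam : ℕ → ℝ := fun n => if m < n then (a (n-1)).toReal / T else 0 with hlam
    have hlam_nonneg : ∀ n, 0 ≤ lam n := by
      intro n
      simp only [hlam]
      split
      · exact div_nonneg ENNReal.toReal_nonneg (le_of_lt hTpos)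
      · exact le_rfl
    have hlam0 : ∀ n ≤ m, lam n = 0 := fun n hn => if_neg (by omega)
    have hTsum : HasSum (fun k => (a (m+k)).toReal) T := by
      have h1 : Summable (fun k => (a (m+k)).toReal) :=
        ENNReal.summable_toReal (by rw [← hts]; exact hfin)
      have h2 : ∑' k, (a (m+k)).toReal = T := by
        rw [hTdef, hts, ENNReal.tsum_toReal_eq (fun k => hane (m+k))]
      exact h2 ▸ h1.hasSum
    have hlamtail : HasSum (fun k => lam (k + (m+1))) 1 := by
      have h2 : (fun k => lam (k + (m+1))) = fun k => (a (m+k)).toReal / T := by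
        funext k
        simp only [hlam]
        rw [if_pos (by omega), show k + (m+1) - 1 = m + k by omega]
      rw [h2]
      have h3 := hTsum.div_const T
      rwa [div_self (ne_of_gt hTpos)] at h3
    have hlamsum : HasSum lam 1 := by
      have h1 := (hasSum_nat_add_iff (f := lam) (m+1)).1 hlamtail
      have h2 : ∑ i ∈ Finset.range (m+1), lam i = 0 :=
        Finset.sum_eq_zero (fun i hi => hlam0 i (by
          rw [Finset.mem_range] at hi; omega))
      rwa [h2, add_zero] at h1
    have hclaim : ∀ n : ℕ, m < n → lam n • g m n = qfun P f n • omega n := by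
      intro n hn
      obtain ⟨i, rfl⟩ : ∃ i, n = i + 1 := ⟨n-1, by omega⟩
      have hqnn : 0 ≤ qfun P f (i+1) := q_nonneg P f hvan i
      by_cases hq : qfun P f (i+1) = 0
      · have ha0 : a i = 0 := by
          simp only [ha]
          rw [hq, ENNReal.ofReal_zero, zero_mul]
        simp only [hlam]
        rw [if_pos hn, show i + 1 - 1 = i by omega, ha0, hq]
        simp
      · have hqpos : 0 < qfun P f (i+1) := lt_of_le_of_ne hqnn (Ne.symm hq)
        have hppos : 0 < pfun P f (i+1) := by
          have h2 : qfun P f (i+1) = pfun P f (i+1) - pfun P f (i+2) := rfl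
          rw [h2] at hqpos
          linarith [p_nonneg P f (i+2)]
        have hρne : rho P (Gset P f (i+1)) ≠ ⊤ := by
          intro hcc
          apply hane i
          simp only [ha]
          rw [hcc, ENNReal.mul_top]
          simp only [ne_eq, ENNReal.ofReal_eq_zero, not_le]
          exact hqpos
        have hρ1 : 1 ≤ rho P (Gset P f (i+1)) := one_le_rho P f hvan hppos
        have hρpos : 0 < (rho P (Gset P f (i+1))).toReal := by
          have h4 := ENNReal.toReal_mono hρne hρ1
          simp only [ENNReal.toReal_one] at h4
          linarith
        rw [hg m (i+1) hn, if_pos hppos]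
        simp only [hlam, ha]
        rw [if_pos hn, show i + 1 - 1 = i by omega]
        rw [ENNReal.toReal_mul, ENNReal.toReal_ofReal (le_of_lt hqpos), smul_smul]
        congr 1
        rw [← hTdef]
        field_simp
    refine ⟨lam, hlam_nonneg, hlam0, hlamsum, ?_⟩
    have hg1 : HasSum (fun k => lam (k + (m+1)) • j m (k + (m+1))) f := by
      have e1 : (fun k => lam (k + (m+1)) • j m (k + (m+1)))
          = fun k => lam (k + (m+1)) • h m + qfun P f (k+m+1) • omega (k+m+1) := by
        funext k
        rw [hj m (k + (m+1)) (by omega), smul_add, hclaim (k + (m+1)) (by omega)]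
        rfl
      rw [e1]
      have h2 : HasSum (fun k => lam (k + (m+1)) • h m) ((1:ℝ) • h m) :=
        hlamtail.smul_const (h m)
      have h4 := h2.add hmain
      have h5 : (1:ℝ) • h m + (f - h m) = f := by rw [one_smul]; abel
      rwa [h5] at h4
    have h1 := (hasSum_nat_add_iff (f := fun n => lam n • j m n) (m+1)).1 hg1
    have h2 : ∑ i ∈ Finset.range (m+1), lam i • j m i = 0 :=
      Finset.sum_eq_zero (fun i hi => by
        rw [hlam0 i (by rw [Finset.mem_range] at hi; omega), zero_smul])
    rwa [h2, add_zero] at h1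
end
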